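/- There exists an absolute constant C > 0 such that the following holds. Let F_q be a finite field with q elements of characteristic greater than 2, and let P ⊆ F_q². For d ∈ F_q, define Π_d(P) = {(x,y) ∈ P² : ‖x−y‖ = d}. Then Σ_{d ∈ F_q} |Π_d(P)|² ≤ C·(|P|⁴/q + q²·|P|²). -/

import Mathlib

/-- The "norm" of a point of `F × F`: `‖(x₁,x₂)‖ = x₁² + x₂²`. -/
def nrm {F : Type*} [Field F] (x : F × F) : F := x.1 ^ 2 + x.2 ^ 2

/-- `Π_d(P)`: ordered pairs of points of `P` at distance `d`. -/
def Pid {F : Type*} [Field F] (P : Set (F × F)) (d : F) : Set ((F × F) × (F × F)) :=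
  {p | p.1 ∈ P ∧ p.2 ∈ P ∧ nrm (p.1 - p.2) = d}

open Finset

section Aux

variable {F : Type} [Field F] [Fintype F] [DecidableEq F]

private lemma ortho (ψ : AddChar F ℂ) (hψ : ψ.IsPrimitive) (b : F) :
    ∑ t : F, ψ (t * b) = if b = 0 then (Fintype.card F : ℂ) else 0 := by
  split_ifs with hb
  · simp [hb]
  · have h2 := AddChar.sum_eq_zero_of_ne_one (hψ hb)
    simpa [AddChar.mulShift_apply, mul_comm] using h2

private lemma ortho2 (ψ : AddChar F ℂ) (hψ : ψ.IsPrimitive) (h2 : (2:F) ≠ 0)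
    {t : F} (ht : t ≠ 0) (y w : F × F) :
    ∑ x : F × F, ψ (t * (nrm (x - y) - nrm (x - w))) =
      if y = w then ((Fintype.card F : ℂ))^2 else 0 := by
  set c := t * (nrm y - nrm w) with hc
  set a1 := -(2*t) * (y.1 - w.1) with ha1
  set a2 := -(2*t) * (y.2 - w.2) with ha2
  have key : ∀ x : F × F, t * (nrm (x - y) - nrm (x - w)) = c + (x.1 * a1 + x.2 * a2) := by
    intro x; simp only [hc, ha1, ha2, nrm, Prod.fst_sub, Prod.snd_sub]; ring
  have expand : ∀ x : F × F, ψ (t * (nrm (x - y) - nrm (x - w)))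
      = ψ c * (ψ (x.1 * a1) * ψ (x.2 * a2)) := by
    intro x; rw [key x, AddChar.map_add_eq_mul, AddChar.map_add_eq_mul]
  calc ∑ x : F × F, ψ (t * (nrm (x - y) - nrm (x - w)))
      = ∑ x1 : F, ∑ x2 : F, ψ c * (ψ (x1 * a1) * ψ (x2 * a2)) := by
        simp_rw [expand]; exact Fintype.sum_prod_type _
    _ = ψ c * ((∑ x1 : F, ψ (x1 * a1)) * (∑ x2 : F, ψ (x2 * a2))) := by
        rw [Finset.sum_mul_sum]; simp_rw [Finset.mul_sum]
    _ = if y = w then ((Fintype.card F : ℂ))^2 else 0 := by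
        rw [ortho ψ hψ a1, ortho ψ hψ a2]
        have hne : (-(2*t)) ≠ 0 := by simp [h2, ht]
        by_cases hyw : y = w
        · subst hyw; simp [hc, ha1, ha2, sq]
        · have : a1 ≠ 0 ∨ a2 ≠ 0 := by
            rcases (Prod.ext_iff.not.1 hyw) with h
            rw [not_and_or] at h
            rcases h with h | h
            · left; simp [ha1, hne, sub_eq_zero, h, h2, ht]
            · right; simp [ha2, hne, sub_eq_zero, h, h2, ht]
          rcases this with h | h <;> simp [h, hyw]

private lemma mul_conj' (z : ℂ) : z * (starRingEnd ℂ) z = ((‖z‖^2 : ℝ) : ℂ) := by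
  simp [Complex.mul_conj, Complex.normSq_eq_norm_sq]

end Aux

/-- The distance-energy bound: `Σ_d |Π_d(P)|² ≤ C·(|P|⁴/q + q²·|P|²)`. -/
theorem distance_energy_bound :
    ∃ C : ℝ, 0 < C ∧
      ∀ (F : Type) [Field F] [Fintype F], 2 < ringChar F →
        ∀ P : Set (F × F),
          (∑ d : F, ((Pid P d).ncard : ℝ) ^ 2) ≤
            C * ((P.ncard : ℝ) ^ 4 / (Fintype.card F : ℝ) +
              (Fintype.card F : ℝ) ^ 2 * (P.ncard : ℝ) ^ 2) := by
  classical
  refine ⟨1, one_pos, ?_⟩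
  intro F _ _ hchar P
  set q : ℕ := Fintype.card F with hqdef
  have hq0 : 0 < q := Fintype.card_pos
  have h2 : (2:F) ≠ 0 := by
    intro hf
    have hd := (CharP.cast_eq_zero_iff F (ringChar F) 2).1 (by exact_mod_cast hf)
    have := Nat.le_of_dvd (by norm_num) hd
    omega
  obtain ⟨ψ, hψ1⟩ := (AddChar.exists_apply_ne_zero (α := F) (a := 1)).2 one_ne_zero
  have hψ : ψ.IsPrimitive := AddChar.IsPrimitive.of_ne_one (fun h => hψ1 (by simp [h]))
  set Q : Finset (F × F) := P.toFinite.toFinset with hQ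
  have hmemQ : ∀ x, x ∈ Q ↔ x ∈ P := fun x => Set.Finite.mem_toFinset _
  set n : ℕ := Q.card with hndef
  have hPcard : P.ncard = n := Set.ncard_eq_toFinset_card _ _
  set N : F → ℕ := fun d => ((Q ×ˢ Q).filter (fun p => nrm (p.1 - p.2) = d)).card with hNdef
  have hN : ∀ d, (Pid P d).ncard = N d := by
    intro d
    have hset : Pid P d = ↑((Q ×ˢ Q).filter fun p => nrm (p.1 - p.2) = d) := by
      ext p
      simp [Pid, hmemQ, Finset.mem_filter, Finset.mem_product, and_assoc]
    rw [hset, Set.ncard_coe_finset]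
  set f : F → F × F → ℂ := fun t x => ∑ y ∈ Q, ψ (t * nrm (x - y)) with hfdef
  set S : F → ℂ := fun t => ∑ x ∈ Q, f t x with hSdef
  -- the complete inner sum
  have keyA : ∀ t : F, t ≠ 0 → ∑ x : F × F, (‖f t x‖^2 : ℝ) = (q:ℝ)^2 * n := by
    intro t ht
    have hc : ((∑ x : F × F, (‖f t x‖^2 : ℝ) : ℝ) : ℂ) = (((q:ℝ)^2 * (n:ℝ) : ℝ) : ℂ) := by
      push_cast
      calc (∑ x : F × F, ((‖f t x‖:ℂ)^2))
          = ∑ x : F × F, f t x * (starRingEnd ℂ) (f t x) := by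
            refine Finset.sum_congr rfl fun x _ => ?_
            rw [mul_conj' (f t x)]; push_cast; ring
        _ = ∑ x : F × F, ∑ y ∈ Q, ∑ w ∈ Q, ψ (t * (nrm (x - y) - nrm (x - w))) := by
            refine Finset.sum_congr rfl fun x _ => ?_
            rw [hfdef]
            simp only
            rw [map_sum, Finset.sum_mul_sum]
            refine Finset.sum_congr rfl fun y _ => Finset.sum_congr rfl fun w _ => ?_
            rw [← AddChar.map_neg_eq_conj, ← AddChar.map_add_eq_mul]
            ring_nf
        _ = ∑ y ∈ Q, ∑ w ∈ Q, ∑ x : F × F, ψ (t * (nrm (x - y) - nrm (x - w))) := by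
            rw [Finset.sum_comm]
            exact Finset.sum_congr rfl fun y _ => Finset.sum_comm
        _ = ∑ y ∈ Q, ∑ w ∈ Q, if y = w then ((q:ℂ))^2 else 0 := by
            refine Finset.sum_congr rfl fun y _ => Finset.sum_congr rfl fun w _ => ?_
            exact ortho2 ψ hψ h2 ht y w
        _ = (q:ℂ)^2 * n := by
            have h1 : ∀ y ∈ Q, (∑ w ∈ Q, if y = w then ((q:ℂ))^2 else 0) = ((q:ℂ))^2 := by
              intro y hy
              rw [Finset.sum_ite_eq Q y (fun _ => ((q:ℂ))^2)]
              simp [hy]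
            rw [Finset.sum_congr rfl h1, Finset.sum_const, nsmul_eq_mul]
            rw [hndef]; ring
    exact Complex.ofReal_injective hc
  -- value at 0
  have keyB : S 0 = ((n:ℂ))^2 := by
    rw [hSdef, hfdef]
    simp [sq, Finset.sum_const, hndef]
  -- Cauchy-Schwarz bound for t ≠ 0
  have keyC : ∀ t : F, t ≠ 0 → ‖S t‖^2 ≤ (q:ℝ)^2 * n^2 := by
    intro t ht
    have h1 : ‖S t‖ ≤ ∑ x ∈ Q, ‖f t x‖ := norm_sum_le _ _
    have h2' : (∑ x ∈ Q, ‖f t x‖)^2 ≤ (n:ℝ) * ∑ x ∈ Q, ‖f t x‖^2 := by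
      have := sq_sum_le_card_mul_sum_sq (s := Q) (f := fun x => ‖f t x‖)
      exact_mod_cast this
    have h3 : ∑ x ∈ Q, ‖f t x‖^2 ≤ ∑ x : F × F, ‖f t x‖^2 :=
      Finset.sum_le_sum_of_subset_of_nonneg (Finset.subset_univ Q)
        (fun _ _ _ => by positivity)
    have h4 : ‖S t‖^2 ≤ (∑ x ∈ Q, ‖f t x‖)^2 :=
      pow_le_pow_left₀ (norm_nonneg _) h1 2
    calc ‖S t‖^2 ≤ (n:ℝ) * ∑ x ∈ Q, ‖f t x‖^2 := h4.trans h2'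
      _ ≤ (n:ℝ) * ∑ x : F × F, ‖f t x‖^2 :=
          mul_le_mul_of_nonneg_left h3 (by positivity)
      _ = (n:ℝ) * ((q:ℝ)^2 * n) := by rw [keyA t ht]
      _ = (q:ℝ)^2 * n^2 := by ring
  -- the main identity
  have keyD : (q:ℝ) * ∑ d : F, (N d:ℝ)^2 = ∑ t : F, ‖S t‖^2 := by
    have hc : ∑ t : F, S t * (starRingEnd ℂ) (S t) = (q:ℂ) * ∑ d : F, (N d:ℂ)^2 := by
      have hS' : ∀ t : F, S t = ∑ p ∈ Q ×ˢ Q, ψ (t * nrm (p.1 - p.2)) := by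
        intro t; rw [hSdef, hfdef]
        exact (Finset.sum_product (s := Q) (t := Q)
          (f := fun p => ψ (t * nrm (p.1 - p.2)))).symm
      calc ∑ t : F, S t * (starRingEnd ℂ) (S t)
          = ∑ t : F, ∑ p ∈ Q ×ˢ Q, ∑ r ∈ Q ×ˢ Q,
              ψ (t * (nrm (p.1 - p.2) - nrm (r.1 - r.2))) := by
            refine Finset.sum_congr rfl fun t _ => ?_
            rw [hS' t, map_sum, Finset.sum_mul_sum]
            refine Finset.sum_congr rfl fun p _ => Finset.sum_congr rfl fun r _ => ?_
            rw [← AddChar.map_neg_eq_conj, ← AddChar.map_add_eq_mul]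
            ring_nf
        _ = ∑ p ∈ Q ×ˢ Q, ∑ r ∈ Q ×ˢ Q, ∑ t : F,
              ψ (t * (nrm (p.1 - p.2) - nrm (r.1 - r.2))) := by
            rw [Finset.sum_comm]
            exact Finset.sum_congr rfl fun p _ => Finset.sum_comm
        _ = ∑ p ∈ Q ×ˢ Q, ∑ r ∈ Q ×ˢ Q,
              if nrm (r.1 - r.2) = nrm (p.1 - p.2) then (q:ℂ) else 0 := by
            refine Finset.sum_congr rfl fun p _ => Finset.sum_congr rfl fun r _ => ?_
            rw [ortho ψ hψ _]
            simp only [sub_eq_zero]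
            exact if_congr eq_comm rfl rfl
        _ = ∑ p ∈ Q ×ˢ Q, (q:ℂ) * (N (nrm (p.1 - p.2)) : ℂ) := by
            refine Finset.sum_congr rfl fun p _ => ?_
            rw [← Finset.sum_filter, Finset.sum_const, nsmul_eq_mul, mul_comm]
        _ = (q:ℂ) * ∑ d : F, (N d:ℂ)^2 := by
            rw [← Finset.mul_sum]
            congr 1
            rw [show (∑ p ∈ Q ×ˢ Q, (N (nrm (p.1 - p.2)) : ℂ))
                = ∑ d : F, ∑ p ∈ (Q ×ˢ Q).filter (fun p => nrm (p.1 - p.2) = d),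
                    (N (nrm (p.1 - p.2)) : ℂ) from
              (Finset.sum_fiberwise_of_maps_to (fun p _ => Finset.mem_univ _) _).symm]
            refine Finset.sum_congr rfl fun d _ => ?_
            have hcongr : ∀ p ∈ (Q ×ˢ Q).filter (fun p => nrm (p.1 - p.2) = d),
                (N (nrm (p.1 - p.2)) : ℂ) = (N d : ℂ) := by
              intro p hp; rw [(Finset.mem_filter.1 hp).2]
            rw [Finset.sum_congr rfl hcongr, Finset.sum_const, nsmul_eq_mul, sq]
    have hc2 : ((∑ t : F, ‖S t‖^2 : ℝ) : ℂ) = (((q:ℝ) * ∑ d : F, (N d:ℝ)^2 : ℝ) : ℂ) := by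
      push_cast
      rw [← hc]
      refine Finset.sum_congr rfl fun t _ => ?_
      rw [mul_conj']
      push_cast
      ring
    exact (Complex.ofReal_injective hc2).symm
  -- assembling the bound
  have hsum : ∑ t : F, ‖S t‖^2 ≤ (n:ℝ)^4 + (q:ℝ)^3 * (n:ℝ)^2 := by
    rw [← Finset.add_sum_erase Finset.univ _ (Finset.mem_univ (0:F))]
    have hS0 : ‖S 0‖^2 = (n:ℝ)^4 := by
      rw [keyB, norm_pow, Complex.norm_natCast]
      ring
    have herase : ∑ t ∈ Finset.univ.erase (0:F), ‖S t‖^2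
        ≤ (q:ℝ)^3 * (n:ℝ)^2 := by
      calc ∑ t ∈ Finset.univ.erase (0:F), ‖S t‖^2
          ≤ (Finset.univ.erase (0:F)).card • ((q:ℝ)^2 * (n:ℝ)^2) :=
            Finset.sum_le_card_nsmul _ _ _
              (fun t ht => keyC t (Finset.ne_of_mem_erase ht))
        _ ≤ (q:ℝ) * ((q:ℝ)^2 * (n:ℝ)^2) := by
            rw [nsmul_eq_mul]
            apply mul_le_mul_of_nonneg_right _ (by positivity)
            rw [Finset.card_erase_of_mem (Finset.mem_univ _), Finset.card_univ]
            calc ((q - 1 : ℕ) : ℝ) ≤ (q:ℕ) := by exact_mod_cast Nat.sub_le q 1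
              _ = (q:ℝ) := rfl
        _ = (q:ℝ)^3 * (n:ℝ)^2 := by ring
    linarith [hS0, herase]
  -- finish
  have hqR : (0:ℝ) < (q:ℝ) := by exact_mod_cast hq0
  simp only [hN, hPcard, one_mul]
  have hrw : ((n:ℝ))^4 / (q:ℝ) + (q:ℝ)^2 * (n:ℝ)^2
      = ((n:ℝ)^4 + (q:ℝ)^3 * (n:ℝ)^2) / (q:ℝ) := by
    field_simp
  rw [hrw, le_div_iff₀ hqR]
  calc (∑ d : F, (N d:ℝ)^2) * (q:ℝ) = (q:ℝ) * ∑ d : F, (N d:ℝ)^2 := by ring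
    _ = ∑ t : F, ‖S t‖^2 := keyD
    _ ≤ (n:ℝ)^4 + (q:ℝ)^3 * (n:ℝ)^2 := hsum
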